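/- Let N ≥ 1 be an integer and let a = (a_1, …, a_N) be positive reals with sum S := ∑_{i=1}^N a_i and minimum t := min_{i∈[N]} a_i. Let b be the family of N positive reals consisting of one entry equal to S − (N−1)·t and N − 1 entries each equal to t. Then Ent(a) ≥ Ent(b). -/

import Mathlib

open Finset Real
open scoped Classical

noncomputable def ent {ι : Type*} (S : Finset ι) (a : ι → ℝ) : ℝ :=
  -∑ i ∈ S, (a i / ∑ j ∈ S, a j) * Real.log (a i / ∑ j ∈ S, a j)

private lemma pair_le {t x y : ℝ} (ht : 0 < t) (hx : t ≤ x) (hy : t ≤ y) :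
    x * Real.log x + y * Real.log y ≤
      t * Real.log t + (x + y - t) * Real.log (x + y - t) := by
  rcases eq_or_lt_of_le hx with h | hx'
  · rw [← h, show t + y - t = y by ring]
  · rcases eq_or_lt_of_le hy with h2 | hy'
    · rw [← h2, show x + t - t = x by ring]; linarith
    · have hf := Real.convexOn_mul_log
      set d := x + y - 2 * t with hd
      have hdpos : 0 < d := by simp [hd]; linarith
      set l : ℝ := (y - t) / d with hl
      have hl0 : 0 ≤ l := div_nonneg (by linarith) hdpos.le
      have hl1 : 0 ≤ 1 - l := by
        have : l ≤ 1 := by rw [hl, div_le_one hdpos]; linarith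
        linarith
      have hsum : l + (1 - l) = 1 := by ring
      have hmemt : t ∈ Set.Ici (0:ℝ) := le_of_lt ht
      have hmems : x + y - t ∈ Set.Ici (0:ℝ) := by simp; linarith
      have e1 : l * t + (1 - l) * (x + y - t) = x := by
        rw [hl]; field_simp; rw [hd]
        ring
      have e2 : (1 - l) * t + l * (x + y - t) = y := by
        rw [hl]; field_simp; rw [hd]
        ring
      have h1 := hf.2 hmemt hmems hl0 hl1 hsum
      have h2 := hf.2 hmemt hmems hl1 hl0 (by ring)
      simp only [smul_eq_mul] at h1 h2
      rw [e1] at h1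
      rw [e2] at h2
      linarith

private lemma sum_f_le {ι : Type*} (t : ℝ) (ht : 0 < t) (s : Finset ι) (hs : s.Nonempty)
    (a : ι → ℝ) (hta : ∀ i ∈ s, t ≤ a i) :
    ∑ i ∈ s, a i * Real.log (a i) ≤
      ((∑ i ∈ s, a i) - ((s.card : ℝ) - 1) * t) *
        Real.log ((∑ i ∈ s, a i) - ((s.card : ℝ) - 1) * t)
        + ((s.card : ℝ) - 1) * (t * Real.log t) := by
  classical
  induction s using Finset.cons_induction with
  | empty => exact absurd hs (by simp)
  | cons i s hi ih =>
    rcases s.eq_empty_or_nonempty with rfl | hs'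
    · simp
    · have hta' : ∀ j ∈ s, t ≤ a j := fun j hj => hta j (Finset.mem_cons_of_mem hj)
      have IH := ih hs' hta'
      have hcard : 1 ≤ (s.card : ℝ) := by
        have := Finset.card_pos.mpr hs'
        exact_mod_cast this
      set y : ℝ := (∑ j ∈ s, a j) - ((s.card : ℝ) - 1) * t with hy
      have hyt : t ≤ y := by
        have hsum : (s.card : ℝ) * t ≤ ∑ j ∈ s, a j := by
          have := Finset.card_nsmul_le_sum s a t hta'
          simpa [nsmul_eq_mul] using this
        rw [hy]; nlinarith
      have hxt : t ≤ a i := hta i (Finset.mem_cons_self i s)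
      have hp := pair_le ht hxt hyt
      rw [Finset.sum_cons, Finset.sum_cons, Finset.card_cons]
      push_cast
      have key : a i + y - t = (a i + ∑ j ∈ s, a j) - ((s.card : ℝ) + 1 - 1) * t := by
        rw [hy]; ring
      rw [← key]
      nlinarith [hp, IH]

private lemma ent_eq {ι : Type*} (S : Finset ι) (a : ι → ℝ) (hS : S.Nonempty)
    (ha : ∀ i ∈ S, 0 < a i) :
    ent S a = Real.log (∑ j ∈ S, a j)
      - (∑ i ∈ S, a i * Real.log (a i)) / (∑ j ∈ S, a j) := by
  have hA : 0 < ∑ j ∈ S, a j := Finset.sum_pos ha hS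
  unfold ent
  have h1 : ∀ i ∈ S, (a i / ∑ j ∈ S, a j) * Real.log (a i / ∑ j ∈ S, a j)
      = (a i * Real.log (a i)) / (∑ j ∈ S, a j)
        - (a i / ∑ j ∈ S, a j) * Real.log (∑ j ∈ S, a j) := by
    intro i hi
    rw [Real.log_div (ha i hi).ne' hA.ne']
    ring
  rw [Finset.sum_congr rfl h1, Finset.sum_sub_distrib, ← Finset.sum_div, ← Finset.sum_mul,
    ← Finset.sum_div, div_self hA.ne', one_mul]
  ring

theorem stmt_13 (N : ℕ) (hN : 1 ≤ N) (a : Fin N → ℝ) (ha : ∀ i, 0 < a i) :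
    ent Finset.univ a ≥
      ent Finset.univ (fun i : Fin N =>
        if (i : ℕ) = 0 then
          (∑ j, a j) - ((N : ℝ) - 1) * Finset.univ.inf' ⟨⟨0, hN⟩, Finset.mem_univ _⟩ a
        else Finset.univ.inf' ⟨⟨0, hN⟩, Finset.mem_univ _⟩ a) := by
  classical
  set t : ℝ := Finset.univ.inf' ⟨⟨0, hN⟩, Finset.mem_univ _⟩ a with htdef
  set z : Fin N := ⟨0, hN⟩ with hz
  set b : Fin N → ℝ := fun i : Fin N =>
    if (i : ℕ) = 0 then (∑ j, a j) - ((N : ℝ) - 1) * t else t with hb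
  have ht : 0 < t := by
    obtain ⟨i, _, hi⟩ := Finset.exists_mem_eq_inf' (⟨z, Finset.mem_univ _⟩ :
      (Finset.univ : Finset (Fin N)).Nonempty) a
    rw [htdef, hi]; exact ha i
  have hta : ∀ i, t ≤ a i := fun i => Finset.inf'_le a (Finset.mem_univ i)
  have hcard : (Finset.univ : Finset (Fin N)).card = N := by simp
  have hNt : (N : ℝ) * t ≤ ∑ j, a j := by
    have := Finset.card_nsmul_le_sum Finset.univ a t (fun i _ => hta i)
    simpa [hcard, nsmul_eq_mul] using this
  have hN1 : (1 : ℝ) ≤ N := by exact_mod_cast hN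
  have hbz : b z = (∑ j, a j) - ((N : ℝ) - 1) * t := by simp [hb, hz]
  have hbne : ∀ i : Fin N, i ≠ z → b i = t := by
    intro i hi
    have : (i : ℕ) ≠ 0 := by
      intro h; apply hi; apply Fin.ext; simpa [hz] using h
    simp [hb, this]
  have hbzt : t ≤ b z := by rw [hbz]; nlinarith
  have hbpos : ∀ i, 0 < b i := by
    intro i
    by_cases hi : i = z
    · rw [hi]; linarith
    · rw [hbne i hi]; exact ht
  have hcerase : ((Finset.univ.erase z).card : ℝ) = (N : ℝ) - 1 := by
    rw [Finset.card_erase_of_mem (Finset.mem_univ z), hcard]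
    push_cast [Nat.cast_sub hN]
    ring
  have hsum_erase : ∀ f : ℝ → ℝ, ∑ i ∈ Finset.univ.erase z, f (b i) = ((N:ℝ) - 1) * f t := by
    intro f
    rw [Finset.sum_congr rfl (fun i hi => by
      rw [hbne i (Finset.ne_of_mem_erase hi)]), Finset.sum_const, nsmul_eq_mul, hcerase]
  have hsumb : ∑ j, b j = ∑ j, a j := by
    rw [← Finset.add_sum_erase _ b (Finset.mem_univ z), hsum_erase (fun x => x), hbz]
    simp
  have hsumfb : ∑ i, b i * Real.log (b i)
      = b z * Real.log (b z) + ((N:ℝ) - 1) * (t * Real.log t) := by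
    rw [← Finset.add_sum_erase _ (fun i => b i * Real.log (b i)) (Finset.mem_univ z),
      hsum_erase (fun x => x * Real.log x)]
  have hkey : ∑ i, a i * Real.log (a i) ≤ ∑ i, b i * Real.log (b i) := by
    rw [hsumfb, hbz]
    have := sum_f_le t ht Finset.univ ⟨z, Finset.mem_univ _⟩ a (fun i _ => hta i)
    rw [hcard] at this
    exact this
  have hA : 0 < ∑ j, a j := Finset.sum_pos (fun i _ => ha i) ⟨z, Finset.mem_univ _⟩
  rw [ent_eq _ a ⟨z, Finset.mem_univ _⟩ (fun i _ => ha i),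
    ent_eq _ b ⟨z, Finset.mem_univ _⟩ (fun i _ => hbpos i), hsumb]
  have : (∑ i, a i * Real.log (a i)) / (∑ j, a j)
      ≤ (∑ i, b i * Real.log (b i)) / (∑ j, a j) :=
    (div_le_div_iff_of_pos_right hA).mpr hkey
  linarith
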